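/- Let X ∈ ℝ^{n×n}, w, v ∈ ℝⁿ, τ > 0, and let X̃ be the (n+1)×(n+1) block matrix with upper-left block X, last column [w; 0], and zero last row. Then the first n components of exp(τ X̃) applied to the vector [v; 1] equal e^{τX} v + τ φ₁(τX) w. -/

import Mathlib

open MeasureTheory intervalIntegral

attribute [local instance] Matrix.linftyOpNormedAddCommGroup Matrix.linftyOpNormedRing
  Matrix.linftyOpNormedAlgebra

/-- `φ₁(X) = ∫₀¹ e^{(1-θ)X} dθ` for a real square matrix `X`. -/
noncomputable def phi1R {n : ℕ} (X : Matrix (Fin n) (Fin n) ℝ) : Matrix (Fin n) (Fin n) ℝ :=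
  ∫ θ in (0:ℝ)..1, NormedSpace.exp ((1 - θ) • X)

set_option maxHeartbeats 1000000

lemma phi1R_hasSum {n : ℕ} (Y : Matrix (Fin n) (Fin n) ℝ) :
    HasSum (fun k : ℕ => ((Nat.factorial (k+1) : ℝ))⁻¹ • Y ^ k) (phi1R Y) := by
  have key : HasSum (fun k : ℕ => ∫ θ in (0:ℝ)..1, (((Nat.factorial k : ℝ))⁻¹ * (1-θ)^k) • Y ^ k)
      (∫ θ in (0:ℝ)..1, NormedSpace.exp ((1 - θ) • Y)) := by
    apply intervalIntegral.hasSum_integral_of_dominated_convergence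
      (bound := fun k _ => ((Nat.factorial k : ℝ))⁻¹ * ‖Y ^ k‖)
    · intro k
      exact (Continuous.smul (continuous_const.mul
        ((continuous_const.sub continuous_id).pow k)) continuous_const).aestronglyMeasurable
    · intro k
      filter_upwards with θ hθ
      rw [Set.uIoc_of_le (by norm_num : (0:ℝ) ≤ 1)] at hθ
      rw [norm_smul]
      gcongr
      rw [Real.norm_eq_abs, abs_mul, abs_pow]
      have h1 : |1 - θ| ≤ 1 := by rw [abs_le]; constructor <;> [linarith [hθ.2]; linarith [hθ.1]]
      calc |(Nat.factorial k : ℝ)⁻¹| * |1-θ|^k ≤ |(Nat.factorial k : ℝ)⁻¹| * 1 := by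
            gcongr; exact pow_le_one₀ (abs_nonneg _) h1
        _ = ((Nat.factorial k : ℝ))⁻¹ := by rw [mul_one, abs_of_nonneg (by positivity)]
    · filter_upwards with θ hθ
      have := NormedSpace.norm_expSeries_summable' (𝕂 := ℝ) Y
      simpa [norm_smul, abs_of_nonneg (a := ((Nat.factorial _ : ℝ))⁻¹) (by positivity)] using this
    · exact intervalIntegrable_const
    · filter_upwards with θ hθ
      have := NormedSpace.exp_series_hasSum_exp' (𝕂 := ℝ) ((1-θ) • Y)
      convert this using 2 with k
      · rfl
      rw [smul_pow, smul_smul, mul_comm]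
      all_goals rfl
  convert key using 2 with k
  rw [intervalIntegral.integral_smul_const]
  congr 1
  rw [intervalIntegral.integral_const_mul]
  have : (∫ θ in (0:ℝ)..1, (1-θ)^k) = (k+1:ℝ)⁻¹ := by
    have := intervalIntegral.integral_comp_sub_left (a := (0:ℝ)) (b := 1) (fun x => x ^ k) 1
    simp only [sub_zero, sub_self] at this
    rw [this, integral_pow]
    push_cast; ring
  rw [this, Nat.factorial_succ]
  push_cast
  rw [mul_inv]
  ring
  rfl


lemma fromBlocks_pow_succ {n : ℕ} (A : Matrix (Fin n) (Fin n) ℝ)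
    (B : Matrix (Fin n) (Fin 1) ℝ) (k : ℕ) :
    (Matrix.fromBlocks A B (0:Matrix (Fin 1) (Fin n) ℝ) (0:Matrix (Fin 1) (Fin 1) ℝ)) ^ (k+1) = Matrix.fromBlocks (A^(k+1)) (A^k * B) 0 0 := by
  induction k with
  | zero => simp
  | succ k ih =>
    rw [pow_succ, ih, Matrix.fromBlocks_multiply]
    simp [← pow_succ]

def fbHom (n : ℕ) : (Matrix (Fin n) (Fin n) ℝ × Matrix (Fin n) (Fin 1) ℝ) →+
    Matrix (Fin n ⊕ Fin 1) (Fin n ⊕ Fin 1) ℝ where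
  toFun p := Matrix.fromBlocks p.1 p.2 0 0
  map_zero' := by simp
  map_add' p q := by simp [Matrix.fromBlocks_add]

lemma exp_fromBlocks {n : ℕ} (A : Matrix (Fin n) (Fin n) ℝ) (B : Matrix (Fin n) (Fin 1) ℝ) :
    NormedSpace.exp (Matrix.fromBlocks A B (0:Matrix (Fin 1) (Fin n) ℝ) (0:Matrix (Fin 1) (Fin 1) ℝ)) =
      Matrix.fromBlocks (NormedSpace.exp A) (phi1R A * B) 0 (1:Matrix (Fin 1) (Fin 1) ℝ) := by
  have hs := NormedSpace.exp_series_hasSum_exp' (𝕂 := ℝ) (Matrix.fromBlocks A B (0:Matrix (Fin 1) (Fin n) ℝ) (0:Matrix (Fin 1) (Fin 1) ℝ))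
  have hexpA := NormedSpace.exp_series_hasSum_exp' (𝕂 := ℝ) A
  have hg : HasSum (fun k : ℕ => ((Nat.factorial (k+1) : ℝ))⁻¹ • A^(k+1))
      (NormedSpace.exp A - 1) := by
    refine (hasSum_nat_add_iff (f := fun k : ℕ => ((Nat.factorial k : ℝ))⁻¹ • A^k) 1).mpr ?_
    simpa using (show HasSum (fun k : ℕ => ((Nat.factorial k : ℝ))⁻¹ • A^k) (NormedSpace.exp A) from hexpA)
  have hh : HasSum (fun k : ℕ => ((Nat.factorial (k+1) : ℝ))⁻¹ • (A^k * B)) (phi1R A * B) := by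
    have hB : Continuous (fun M : Matrix (Fin n) (Fin n) ℝ => M * B) :=
      Continuous.matrix_mul continuous_id continuous_const
    have := (phi1R_hasSum A).map
      (AddMonoidHom.mk' (fun M : Matrix (Fin n) (Fin n) ℝ => M * B) (fun x y => Matrix.add_mul x y B)) hB
    simpa [Function.comp_def, Matrix.smul_mul] using this
  have hcont : Continuous (fbHom n) := by
    exact Continuous.matrix_fromBlocks continuous_fst continuous_snd
      continuous_const continuous_const
  have hsum2 := ((hg.prodMk hh).map (fbHom n) hcont)
  have hsum3 : HasSum (fun k : ℕ =>
      ((Nat.factorial (k+1) : ℝ))⁻¹ • (Matrix.fromBlocks A B (0:Matrix (Fin 1) (Fin n) ℝ) (0:Matrix (Fin 1) (Fin 1) ℝ))^(k+1))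
      (Matrix.fromBlocks (NormedSpace.exp A - 1) (phi1R A * B) 0 0) := by
    convert hsum2 using 2 with k
    rw [fromBlocks_pow_succ]
    show _ = Matrix.fromBlocks _ _ 0 0
    rw [Matrix.fromBlocks_smul]
    simp
    rfl
  have hsum4 : HasSum (fun k : ℕ =>
      ((Nat.factorial k : ℝ))⁻¹ • (Matrix.fromBlocks A B (0:Matrix (Fin 1) (Fin n) ℝ) (0:Matrix (Fin 1) (Fin 1) ℝ))^k)
      (Matrix.fromBlocks (NormedSpace.exp A) (phi1R A * B) 0 (1:Matrix (Fin 1) (Fin 1) ℝ)) := by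
    have := (hasSum_nat_add_iff (f := fun k : ℕ =>
      ((Nat.factorial k : ℝ))⁻¹ • (Matrix.fromBlocks A B (0:Matrix (Fin 1) (Fin n) ℝ) (0:Matrix (Fin 1) (Fin 1) ℝ))^k) 1).mp hsum3
    convert this using 1
    · rfl
    rw [Finset.sum_range_one]
    simp only [pow_zero, Nat.factorial_zero, Nat.cast_one, inv_one, one_smul]
    rw [← Matrix.fromBlocks_one, Matrix.fromBlocks_add]
    simp
  exact hs.unique hsum4

/-- Saad 1992, Proposition 2.1: augmented-matrix formula for
`e^{τX} v + τ φ₁(τX) w`. -/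
theorem augmented_exp_formula {n : ℕ} (X : Matrix (Fin n) (Fin n) ℝ)
    (w v : Fin n → ℝ) (τ : ℝ) (hτ : 0 < τ) :
    let Xt : Matrix (Fin n ⊕ Fin 1) (Fin n ⊕ Fin 1) ℝ :=
      Matrix.fromBlocks X (Matrix.of fun i _ => w i) 0 0
    let vt : (Fin n ⊕ Fin 1) → ℝ := Sum.elim v (fun _ => 1)
    ∀ i : Fin n,
      (NormedSpace.exp (τ • Xt)).mulVec vt (Sum.inl i) =
        ((NormedSpace.exp (τ • X)).mulVec v + τ • (phi1R (τ • X)).mulVec w) i := by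
  intro Xt vt i
  have hXt : τ • Xt = Matrix.fromBlocks (τ • X) (τ • Matrix.of fun i (_ : Fin 1) => w i)
      (0:Matrix (Fin 1) (Fin n) ℝ) (0:Matrix (Fin 1) (Fin 1) ℝ) := by
    show τ • Matrix.fromBlocks X (Matrix.of fun i _ => w i) 0 0 = _
    rw [Matrix.fromBlocks_smul]
    simp
  rw [hXt, exp_fromBlocks, Matrix.fromBlocks_mulVec]
  simp only [Sum.elim_inl]
  have hvt1 : vt ∘ Sum.inl = v := rfl
  have hvt2 : vt ∘ Sum.inr = fun _ : Fin 1 => (1:ℝ) := rfl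
  rw [hvt1, hvt2]
  have : (phi1R (τ • X) * (τ • Matrix.of fun i (_ : Fin 1) => w i)).mulVec
      (fun _ : Fin 1 => (1:ℝ)) = τ • (phi1R (τ • X)).mulVec w := by
    rw [← Matrix.mulVec_mulVec]
    congr 1
    funext j
    simp only [Matrix.mulVec, dotProduct, Pi.smul_apply, Matrix.smul_apply,
      Matrix.of_apply, smul_eq_mul, Finset.mul_sum, Fin.sum_univ_one]
    exact Finset.sum_congr rfl (fun x _ => by ring)
  rw [this]
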